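/- Let z ∈ ℝ^d be the unit vector with z_i = Z_d^{-1/2} i^{-1/2}, Z_d = ∑_{i=1}^d 1/i, and let t > 0. Then ⟨z, L(t) z⟩ ≥ (2t/Z_d)( ln(√(d·min(1,t²)+1) + √(d·min(1,t²)+t²)) − ln(t+1) ), where L(t)_{i,j} = λ([i-1,i)∩[(j-1)t², jt²)). -/

import Mathlib

open MeasureTheory

noncomputable def Lmat (d : ℕ) (t : ℝ) : Matrix (Fin d) (Fin d) ℝ :=
  fun i j => (volume (Set.Ico (i : ℝ) ((i : ℝ) + 1) ∩
    Set.Ico ((j : ℝ) * t ^ 2) (((j : ℝ) + 1) * t ^ 2))).toReal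

noncomputable def Zd (d : ℕ) : ℝ := ∑ i ∈ Finset.range d, ((i : ℝ) + 1)⁻¹

noncomputable def zvec (d : ℕ) (i : Fin d) : ℝ :=
  (Real.sqrt (Zd d))⁻¹ * (Real.sqrt ((i : ℝ) + 1))⁻¹

lemma aux_ftc (t M : ℝ) (ht : 0 < t) (hM : 0 ≤ M) :
    ∫ r in (0:ℝ)..M, t / (Real.sqrt (r+1) * Real.sqrt (r+t^2)) =
      2*t*Real.log (Real.sqrt (M+1) + Real.sqrt (M+t^2)) - 2*t*Real.log (t+1) := by
  have ht2 : 0 < t^2 := by positivity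
  have key : ∫ r in (0:ℝ)..M, t / (Real.sqrt (r+1) * Real.sqrt (r+t^2)) =
      (fun r => 2*t*Real.log (Real.sqrt (r+1) + Real.sqrt (r+t^2))) M -
      (fun r => 2*t*Real.log (Real.sqrt (r+1) + Real.sqrt (r+t^2))) 0 := by
    apply intervalIntegral.integral_eq_sub_of_hasDerivAt
    · intro x hx
      rw [Set.uIcc_of_le hM] at hx
      have hx0 : 0 ≤ x := hx.1
      have h1 : (0:ℝ) < x + 1 := by linarith
      have h2 : (0:ℝ) < x + t^2 := by linarith
      have ha : 0 < Real.sqrt (x+1) := Real.sqrt_pos.mpr h1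
      have hb : 0 < Real.sqrt (x+t^2) := Real.sqrt_pos.mpr h2
      have da : HasDerivAt (fun r : ℝ => Real.sqrt (r+1)) (1 / (2 * Real.sqrt (x+1))) x := by
        have := ((hasDerivAt_id x).add_const (1:ℝ)).sqrt (ne_of_gt h1)
        simpa using this
      have db : HasDerivAt (fun r : ℝ => Real.sqrt (r+t^2)) (1 / (2 * Real.sqrt (x+t^2))) x := by
        have := ((hasDerivAt_id x).add_const (t^2)).sqrt (ne_of_gt h2)
        simpa using this
      have dsum := da.add db
      have hne : Real.sqrt (x+1) + Real.sqrt (x+t^2) ≠ 0 := by positivity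
      have dlog := dsum.log hne
      have := dlog.const_mul (2*t)
      convert this using 1
      case e'_4 => rfl
      case e'_8 => rfl
      have sa := Real.sq_sqrt h1.le
      have sb := Real.sq_sqrt h2.le
      simp only [Pi.add_apply]
      field_simp
      ring
    · apply ContinuousOn.intervalIntegrable
      apply ContinuousOn.div continuousOn_const
      · exact ((Real.continuous_sqrt.comp (continuous_id.add continuous_const)).mul
          (Real.continuous_sqrt.comp (continuous_id.add continuous_const))).continuousOn
      · intro x hx
        rw [Set.uIcc_of_le hM] at hx
        have h1 : (0:ℝ) < x + 1 := by linarith [hx.1]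
        have h2 : (0:ℝ) < x + t^2 := by linarith [hx.1]
        positivity
  rw [key]
  simp only
  rw [show (0:ℝ) + 1 = 1 by ring, Real.sqrt_one, zero_add, Real.sqrt_sq ht.le, add_comm 1 t]

theorem lmat_bilinear_ge_closed_form (d : ℕ) (hd : 1 ≤ d) (t : ℝ) (ht : 0 < t) :
    (2 * t / Zd d) * (Real.log (Real.sqrt ((d : ℝ) * min 1 (t ^ 2) + 1) +
          Real.sqrt ((d : ℝ) * min 1 (t ^ 2) + t ^ 2)) - Real.log (t + 1)) ≤
      ∑ i, ∑ j, Lmat d t i j * zvec d i * zvec d j := by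
  have ht2 : 0 < t ^ 2 := by positivity
  have hd1 : (1:ℝ) ≤ (d:ℝ) := by exact_mod_cast hd
  have hd0 : (0:ℝ) ≤ (d:ℝ) := by linarith
  set m : ℝ := min 1 (t ^ 2) with hm
  have hm0 : 0 < m := lt_min one_pos ht2
  set M : ℝ := (d:ℝ) * m with hMdef
  have hM0 : 0 ≤ M := by positivity
  have hMd : M ≤ (d:ℝ) := by
    calc M ≤ (d:ℝ) * 1 := by
          apply mul_le_mul_of_nonneg_left (min_le_left _ _) hd0
      _ = (d:ℝ) := mul_one _
  have hMdt : M ≤ (d:ℝ) * t ^ 2 :=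
    mul_le_mul_of_nonneg_left (min_le_right _ _) hd0
  set h : ℝ → ℝ := fun r => t / (Real.sqrt (r+1) * Real.sqrt (r+t^2)) with hh
  set S : Fin d × Fin d → Set ℝ := fun p =>
    Set.Ico ((p.1:ℝ)) ((p.1:ℝ)+1) ∩ Set.Ico ((p.2:ℝ)*t^2) (((p.2:ℝ)+1)*t^2) with hS
  have hZ1 : (1:ℝ) ≤ Zd d := by
    have := Finset.single_le_sum (f := fun i : ℕ => ((i:ℝ)+1)⁻¹)
      (fun i _ => by positivity) (Finset.mem_range.mpr hd)
    simpa [Zd] using this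
  have hZ0 : (0:ℝ) < Zd d := lt_of_lt_of_le one_pos hZ1
  -- union
  have hunion : (⋃ p : Fin d × Fin d, S p) = Set.Ico (0:ℝ) M := by
    ext x
    simp only [hS, Set.mem_iUnion, Set.mem_inter_iff, Set.mem_Ico]
    constructor
    · rintro ⟨p, ⟨h1, h2⟩, h3, h4⟩
      have hp1 : ((p.1:ℕ):ℝ) + 1 ≤ (d:ℝ) := by exact_mod_cast p.1.isLt
      have hp2 : ((p.2:ℕ):ℝ) + 1 ≤ (d:ℝ) := by exact_mod_cast p.2.isLt
      refine ⟨le_trans (by positivity) h1, ?_⟩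
      rcases le_total (t^2) 1 with hc | hc
      · have hMeq : M = (d:ℝ) * t^2 := by rw [hMdef, hm, min_eq_right hc]
        rw [hMeq]
        calc x < ((p.2:ℝ)+1)*t^2 := h4
          _ ≤ (d:ℝ)*t^2 := mul_le_mul_of_nonneg_right hp2 ht2.le
      · have hMeq : M = (d:ℝ) := by rw [hMdef, hm, min_eq_left hc, mul_one]
        rw [hMeq]
        calc x < (p.1:ℝ)+1 := h2
          _ ≤ (d:ℝ) := hp1
    · rintro ⟨hx0, hxM⟩
      have hxd : x < (d:ℝ) := lt_of_lt_of_le hxM hMd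
      have hxdt : x < (d:ℝ) * t^2 := lt_of_lt_of_le hxM hMdt
      have hi : ⌊x⌋₊ < d := (Nat.floor_lt hx0).mpr hxd
      have hj : ⌊x / t^2⌋₊ < d :=
        (Nat.floor_lt (by positivity)).mpr ((div_lt_iff₀ ht2).mpr hxdt)
      refine ⟨(⟨⌊x⌋₊, hi⟩, ⟨⌊x / t^2⌋₊, hj⟩), ⟨?_, ?_⟩, ?_, ?_⟩
      · simpa using Nat.floor_le hx0
      · simpa using Nat.lt_floor_add_one x
      · have hfl : (⌊x / t^2⌋₊ : ℝ) ≤ x / t^2 := Nat.floor_le (by positivity)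
        have := mul_le_mul_of_nonneg_right hfl ht2.le
        rw [div_mul_cancel₀ _ (ne_of_gt ht2)] at this
        simpa using this
      · have hfl : x / t^2 < (⌊x / t^2⌋₊ : ℝ) + 1 := Nat.lt_floor_add_one _
        have := (div_lt_iff₀ ht2).mp hfl
        simpa using this
  -- disjointness
  have hdisj : ((Finset.univ : Finset (Fin d × Fin d)) : Set (Fin d × Fin d)).Pairwise (Function.onFun Disjoint S) := by
    intro p _ q _ hpq
    by_cases hp1 : p.1 = q.1
    · have hp2 : p.2 ≠ q.2 := fun h2 => hpq (Prod.ext hp1 h2)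
      have hdB : Disjoint (Set.Ico ((p.2:ℝ)*t^2) (((p.2:ℝ)+1)*t^2))
          (Set.Ico ((q.2:ℝ)*t^2) (((q.2:ℝ)+1)*t^2)) := by
        rw [Set.Ico_disjoint_Ico]
        rcases lt_or_gt_of_ne hp2 with hlt | hlt
        · have hc : ((p.2:ℕ):ℝ) + 1 ≤ ((q.2:ℕ):ℝ) := by exact_mod_cast hlt
          calc min (((p.2:ℝ)+1)*t^2) (((q.2:ℝ)+1)*t^2) ≤ ((p.2:ℝ)+1)*t^2 := min_le_left _ _
            _ ≤ (q.2:ℝ)*t^2 := mul_le_mul_of_nonneg_right hc ht2.le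
            _ ≤ max ((p.2:ℝ)*t^2) ((q.2:ℝ)*t^2) := le_max_right _ _
        · have hc : ((q.2:ℕ):ℝ) + 1 ≤ ((p.2:ℕ):ℝ) := by exact_mod_cast hlt
          calc min (((p.2:ℝ)+1)*t^2) (((q.2:ℝ)+1)*t^2) ≤ ((q.2:ℝ)+1)*t^2 := min_le_right _ _
            _ ≤ (p.2:ℝ)*t^2 := mul_le_mul_of_nonneg_right hc ht2.le
            _ ≤ max ((p.2:ℝ)*t^2) ((q.2:ℝ)*t^2) := le_max_left _ _
      exact hdB.mono Set.inter_subset_right Set.inter_subset_right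
    · have hdA : Disjoint (Set.Ico ((p.1:ℝ)) ((p.1:ℝ)+1)) (Set.Ico ((q.1:ℝ)) ((q.1:ℝ)+1)) := by
        rw [Set.Ico_disjoint_Ico]
        rcases lt_or_gt_of_ne hp1 with hlt | hlt
        · have hc : ((p.1:ℕ):ℝ) + 1 ≤ ((q.1:ℕ):ℝ) := by exact_mod_cast hlt
          calc min ((p.1:ℝ)+1) ((q.1:ℝ)+1) ≤ (p.1:ℝ)+1 := min_le_left _ _
            _ ≤ (q.1:ℝ) := hc
            _ ≤ max ((p.1:ℝ)) ((q.1:ℝ)) := le_max_right _ _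
        · have hc : ((q.1:ℕ):ℝ) + 1 ≤ ((p.1:ℕ):ℝ) := by exact_mod_cast hlt
          calc min ((p.1:ℝ)+1) ((q.1:ℝ)+1) ≤ (q.1:ℝ)+1 := min_le_right _ _
            _ ≤ (p.1:ℝ) := hc
            _ ≤ max ((p.1:ℝ)) ((q.1:ℝ)) := le_max_left _ _
      exact hdA.mono Set.inter_subset_left Set.inter_subset_left
  -- integrability
  have hcont : ContinuousOn h (Set.Icc (0:ℝ) M) := by
    apply ContinuousOn.div continuousOn_const
    · exact ((Real.continuous_sqrt.comp (continuous_id.add continuous_const)).mul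
        (Real.continuous_sqrt.comp (continuous_id.add continuous_const))).continuousOn
    · intro x hx
      have h1 : (0:ℝ) < x + 1 := by linarith [hx.1]
      have h2 : (0:ℝ) < x + t^2 := by linarith [hx.1]
      positivity
  have hint : IntegrableOn h (Set.Ico (0:ℝ) M) :=
    (hcont.integrableOn_compact isCompact_Icc).mono_set Set.Ico_subset_Icc_self
  -- split the integral
  have hsplit : ∫ x in Set.Ico (0:ℝ) M, h x = ∑ p : Fin d × Fin d, ∫ x in S p, h x := by
    have hmeas : ∀ p ∈ (Finset.univ : Finset (Fin d × Fin d)), MeasurableSet (S p) :=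
      fun p _ => measurableSet_Ico.inter measurableSet_Ico
    have hintp : ∀ p ∈ (Finset.univ : Finset (Fin d × Fin d)), IntegrableOn h (S p) volume :=
      fun p _ => hint.mono_set (by rw [← hunion]; exact Set.subset_iUnion S p)
    have := integral_biUnion_finset (μ := volume) (f := h) Finset.univ hmeas hdisj hintp
    simpa [hunion] using this
  -- per-piece bound
  have hbound : ∀ p : Fin d × Fin d, ∫ x in S p, h x ≤
      (Real.sqrt ((p.1:ℝ)+1))⁻¹ * (Real.sqrt ((p.2:ℝ)+1))⁻¹ * (volume (S p)).toReal := by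
    intro p
    have hap : 0 < Real.sqrt ((p.1:ℝ)+1) := Real.sqrt_pos.mpr (by positivity)
    have hbp : 0 < Real.sqrt ((p.2:ℝ)+1) := Real.sqrt_pos.mpr (by positivity)
    set C : ℝ := (Real.sqrt ((p.1:ℝ)+1))⁻¹ * (Real.sqrt ((p.2:ℝ)+1))⁻¹ with hC
    have hfin : volume (S p) < ⊤ :=
      lt_of_le_of_lt (measure_mono Set.inter_subset_left) measure_Ico_lt_top
    have hmeas : AEStronglyMeasurable h (volume.restrict (S p)) := by
      apply Measurable.aestronglyMeasurable
      exact measurable_const.div (((Real.continuous_sqrt.comp (continuous_id.add continuous_const)).mul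
        (Real.continuous_sqrt.comp (continuous_id.add continuous_const))).measurable)
    have hCb : ∀ x ∈ S p, ‖h x‖ ≤ C := by
      intro x hx
      obtain ⟨⟨hx1, _⟩, hx3, _⟩ := hx
      have hx0 : 0 ≤ x := le_trans (by positivity) hx1
      have ha : Real.sqrt ((p.1:ℝ)+1) ≤ Real.sqrt (x+1) := Real.sqrt_le_sqrt (by linarith)
      have hb : Real.sqrt ((p.2:ℝ)+1) * t ≤ Real.sqrt (x+t^2) := by
        have h2 : ((p.2:ℝ)+1)*t^2 ≤ x + t^2 := by linarith
        have h3 := Real.sqrt_le_sqrt h2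
        rwa [Real.sqrt_mul (by positivity) (t^2), Real.sqrt_sq ht.le] at h3
      have hda : 0 < Real.sqrt (x+1) := lt_of_lt_of_le hap ha
      have hdb : 0 < Real.sqrt (x+t^2) := lt_of_lt_of_le (by positivity) hb
      have hhx : h x = t / (Real.sqrt (x+1) * Real.sqrt (x+t^2)) := rfl
      rw [Real.norm_eq_abs, hhx, abs_of_nonneg (by positivity)]
      have step : t / (Real.sqrt (x+1) * Real.sqrt (x+t^2))
          ≤ t / (Real.sqrt ((p.1:ℝ)+1) * (Real.sqrt ((p.2:ℝ)+1) * t)) := by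
        apply div_le_div_of_nonneg_left ht.le (by positivity)
        exact mul_le_mul ha hb (by positivity) hda.le
      have heq : t / (Real.sqrt ((p.1:ℝ)+1) * (Real.sqrt ((p.2:ℝ)+1) * t)) = C := by
        rw [hC]; field_simp
      rw [heq] at step
      exact step
    have := norm_setIntegral_le_of_norm_le_const hfin hCb
    rw [Real.norm_eq_abs] at this
    calc ∫ x in S p, h x ≤ |∫ x in S p, h x| := le_abs_self _
      _ ≤ C * (volume (S p)).toReal := this
      _ = (Real.sqrt ((p.1:ℝ)+1))⁻¹ * (Real.sqrt ((p.2:ℝ)+1))⁻¹ * (volume (S p)).toReal := by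
          rw [hC]
  -- rewrite the bilinear sum
  have hzz : (Real.sqrt (Zd d))⁻¹ * (Real.sqrt (Zd d))⁻¹ = (Zd d)⁻¹ := by
    rw [← mul_inv, Real.mul_self_sqrt hZ0.le]
  have hsum : ∑ i, ∑ j, Lmat d t i j * zvec d i * zvec d j
      = (Zd d)⁻¹ * ∑ p : Fin d × Fin d,
          (Real.sqrt ((p.1:ℝ)+1))⁻¹ * (Real.sqrt ((p.2:ℝ)+1))⁻¹ * (volume (S p)).toReal := by
    rw [Finset.mul_sum, Fintype.sum_prod_type]
    apply Finset.sum_congr rfl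
    intro i _
    apply Finset.sum_congr rfl
    intro j _
    simp only [Lmat, zvec, hS]
    rw [← hzz]
    ring
  -- evaluate the integral
  have hIeq : ∫ x in Set.Ico (0:ℝ) M, h x
      = 2*t*Real.log (Real.sqrt (M+1) + Real.sqrt (M+t^2)) - 2*t*Real.log (t+1) := by
    rw [setIntegral_congr_set Ico_ae_eq_Ioc, ← intervalIntegral.integral_of_le hM0]
    exact aux_ftc t M ht hM0
  rw [hsum]
  have hLHS : (2 * t / Zd d) * (Real.log (Real.sqrt (M + 1) + Real.sqrt (M + t ^ 2)) -
      Real.log (t + 1)) = (Zd d)⁻¹ *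
      (2*t*Real.log (Real.sqrt (M+1) + Real.sqrt (M+t^2)) - 2*t*Real.log (t+1)) := by
    rw [div_eq_mul_inv]; ring
  rw [hLHS, ← hIeq]
  apply mul_le_mul_of_nonneg_left _ (inv_nonneg.mpr hZ0.le)
  rw [hsplit]
  exact Finset.sum_le_sum fun p _ => hbound p
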